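/- arXiv:1810.08078 — 6 statements merged into one kernel-verified Lean document; each statement's English description precedes it below -/
import Mathlib

section
/- Suppose two users k1 and k2 are paired on a subcarrier and powered by two different RRHs r1 and r2 respectively, with h12 ≥ h22 and h21 ≥ h11. Then both users can perform SIC, i.e. R2@1 ≥ R2@2 and R1@2 ≥ R1@1. -/
lemma aux_div_le (P Q σ2 a b c d : ℝ) (hP : 0 < P) (hQ : 0 < Q) (hσ2 : 0 < σ2)
    (h1 : b ≤ a) (h2 : d ≤ c) (hb : 0 < b) (hd : 0 < d) :
    P * b ^ 2 / (Q * c ^ 2 + σ2) ≤ P * a ^ 2 / (Q * d ^ 2 + σ2) := by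
  have hden : 0 < Q * d ^ 2 + σ2 := by positivity
  gcongr

/-- Two users paired on a subcarrier, powered by distinct RRHs `r1`, `r2`.
If `h12 ≥ h22` and `h21 ≥ h11`, both users can perform SIC:
`R2@1 ≥ R2@2` and `R1@2 ≥ R1@1`. -/
theorem mutual_SIC_sufficient_conditions
    (B S σ2 P1 P2 h11 h12 h21 h22 : ℝ)
    (hB : 0 < B) (hS : 0 < S) (hσ2 : 0 < σ2) (hP1 : 0 < P1) (hP2 : 0 < P2)
    (hh11 : 0 < h11) (hh12 : 0 < h12) (hh21 : 0 < h21) (hh22 : 0 < h22)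
    (hcond1 : h12 ≥ h22) (hcond2 : h21 ≥ h11) :
    (B / S) * Real.logb 2 (1 + P2 * h12 ^ 2 / (P1 * h11 ^ 2 + σ2)) ≥
      (B / S) * Real.logb 2 (1 + P2 * h22 ^ 2 / (P1 * h21 ^ 2 + σ2)) ∧
    (B / S) * Real.logb 2 (1 + P1 * h21 ^ 2 / (P2 * h22 ^ 2 + σ2)) ≥
      (B / S) * Real.logb 2 (1 + P1 * h11 ^ 2 / (P2 * h12 ^ 2 + σ2)) := by
  have hBS : 0 ≤ B / S := le_of_lt (by positivity)
  have key1 := aux_div_le P2 P1 σ2 h12 h22 h21 h11 hP2 hP1 hσ2 hcond1 hcond2 hh22 hh11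
  have key2 := aux_div_le P1 P2 σ2 h21 h11 h12 h22 hP1 hP2 hσ2 hcond2 hcond1 hh11 hh22
  constructor <;>
  · apply mul_le_mul_of_nonneg_left _ hBS
    apply Real.logb_le_logb_of_le one_lt_two (by positivity)
    linarith
end

section
/- In the special case where both multiplexed signals are powered by the same RRH (h11 = h21 = h1 and h12 = h22 = h2) with h1 > h2, only the stronger user can perform SIC: R2@1 > R2@2 and R1@2 < R1@1. In particular it is impossible for both users to perform SIC simultaneously. -/
lemma sinr_mono (σ2 P Q a b : ℝ) (hσ2 : 0 < σ2) (hP : 0 < P) (hQ : 0 < Q)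
    (hb : 0 < b) (hab : b < a) :
    1 + P * b / (Q * b + σ2) < 1 + P * a / (Q * a + σ2) := by
  have ha : 0 < a := hb.trans hab
  have h1 : 0 < Q * b + σ2 := by positivity
  have h2 : 0 < Q * a + σ2 := by positivity
  have : P * b / (Q * b + σ2) < P * a / (Q * a + σ2) := by
    rw [div_lt_div_iff₀ h1 h2]
    nlinarith [mul_pos (mul_pos hP hσ2) (sub_pos.mpr hab)]
  linarith

lemma rate_lt (B S σ2 P Q a b : ℝ) (hB : 0 < B) (hS : 0 < S) (hσ2 : 0 < σ2)
    (hP : 0 < P) (hQ : 0 < Q) (hb : 0 < b) (hab : b < a) :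
    (B / S) * Real.logb 2 (1 + P * b / (Q * b + σ2)) <
      (B / S) * Real.logb 2 (1 + P * a / (Q * a + σ2)) := by
  have hlt := sinr_mono σ2 P Q a b hσ2 hP hQ hb hab
  have hpos : (0:ℝ) < 1 + P * b / (Q * b + σ2) := by positivity
  exact mul_lt_mul_of_pos_left (Real.logb_lt_logb one_lt_two hpos hlt) (by positivity)

/-- Special case of a single powering RRH (`h11 = h21 = h1`, `h12 = h22 = h2`)
with `h1 > h2`: only the stronger user can perform SIC
(`R2@1 > R2@2` and `R1@2 < R1@1`); in particular mutual SIC is impossible. -/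
theorem single_RRH_only_strong_user_SIC
    (B S σ2 P1 P2 h1 h2 : ℝ)
    (hB : 0 < B) (hS : 0 < S) (hσ2 : 0 < σ2) (hP1 : 0 < P1) (hP2 : 0 < P2)
    (hh1 : 0 < h1) (hh2 : 0 < h2) (h12 : h1 > h2) :
    (B / S) * Real.logb 2 (1 + P2 * h1 ^ 2 / (P1 * h1 ^ 2 + σ2)) >
      (B / S) * Real.logb 2 (1 + P2 * h2 ^ 2 / (P1 * h2 ^ 2 + σ2)) ∧
    (B / S) * Real.logb 2 (1 + P1 * h2 ^ 2 / (P2 * h2 ^ 2 + σ2)) <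
      (B / S) * Real.logb 2 (1 + P1 * h1 ^ 2 / (P2 * h1 ^ 2 + σ2)) ∧
    ¬ ((B / S) * Real.logb 2 (1 + P2 * h1 ^ 2 / (P1 * h1 ^ 2 + σ2)) ≥
        (B / S) * Real.logb 2 (1 + P2 * h2 ^ 2 / (P1 * h2 ^ 2 + σ2)) ∧
       (B / S) * Real.logb 2 (1 + P1 * h2 ^ 2 / (P2 * h2 ^ 2 + σ2)) ≥
        (B / S) * Real.logb 2 (1 + P1 * h1 ^ 2 / (P2 * h1 ^ 2 + σ2))) := by
  have hsq : h2 ^ 2 < h1 ^ 2 := by nlinarith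
  have hsq2 : 0 < h2 ^ 2 := by positivity
  have h1' := rate_lt B S σ2 P2 P1 (h1^2) (h2^2) hB hS hσ2 hP2 hP1 hsq2 hsq
  have h2' := rate_lt B S σ2 P1 P2 (h1^2) (h2^2) hB hS hσ2 hP1 hP2 hsq2 hsq
  exact ⟨h1', h2', fun ⟨_, hc⟩ => absurd hc (not_le.mpr h2')⟩
end

section
/- Let w > 0 be the waterline over N ≥ 1 subcarriers, σ² > 0, h > 0, and define the power variation ΔP = (N+1)·(wᴺ·σ²/h²)^{1/(N+1)} − N·w − σ²/h² incurred by adding a subcarrier with gain h under a constant total rate. Then ΔP ≤ 0, with equality if and only if σ²/h² = w. -/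
/-- The power variation `ΔP = (N+1)·(wᴺ·σ²/h²)^(1/(N+1)) − N·w − σ²/h²`
incurred by adding a subcarrier of gain `h` under constant total rate is
nonpositive, with equality iff `σ²/h² = w`. -/
theorem power_variation_nonpositive
    (N : ℕ) (hN : 1 ≤ N) (w σ2 h : ℝ) (hw : 0 < w) (hσ2 : 0 < σ2) (hh : 0 < h) :
    ((N : ℝ) + 1) * (w ^ N * σ2 / h ^ 2) ^ ((1 : ℝ) / (N + 1)) - N * w - σ2 / h ^ 2 ≤ 0 ∧
    (((N : ℝ) + 1) * (w ^ N * σ2 / h ^ 2) ^ ((1 : ℝ) / (N + 1)) - N * w - σ2 / h ^ 2 = 0 ↔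
      σ2 / h ^ 2 = w) := by
  set t : ℝ := σ2 / h ^ 2 with htdef
  have ht : 0 < t := div_pos hσ2 (pow_pos hh 2)
  set p : ℝ := (1 : ℝ) / (N + 1) with hpdef
  have hN1 : (0 : ℝ) < (N : ℝ) + 1 := by positivity
  have hp0 : 0 < p := by positivity
  have hp1 : p ≤ 1 := by
    rw [hpdef, div_le_one hN1]; have : (1:ℝ) ≤ (N:ℝ) := by exact_mod_cast hN
    linarith
  have hNp : ((N : ℝ) + 1) * p = 1 := by
    rw [hpdef]; field_simp
  set a : ℝ := t / w with hadef
  have ha : 0 < a := div_pos ht hw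
  -- rewrite the rpow term
  have hbase : w ^ N * σ2 / h ^ 2 = w ^ (N + 1) * a := by
    rw [hadef, htdef]; field_simp; ring
  have hrw : (w ^ N * σ2 / h ^ 2) ^ p = w * a ^ p := by
    rw [hbase, Real.mul_rpow (by positivity) ha.le]
    congr 1
    rw [← Real.rpow_natCast w (N + 1), ← Real.rpow_mul hw.le]
    rw [show ((N + 1 : ℕ) : ℝ) * p = 1 by push_cast; rw [hNp]]
    exact Real.rpow_one w
  -- key factorization
  have hfact : ((N : ℝ) + 1) * (w ^ N * σ2 / h ^ 2) ^ p - N * w - t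
      = (((N : ℝ) + 1) * w) * (a ^ p - (1 + p * (a - 1))) := by
    rw [hrw]
    have hta : t = w * a := by rw [hadef]; field_simp
    rw [hta]
    have : (((N : ℝ) + 1) * w) * (1 + p * (a - 1))
        = ((N : ℝ) + 1) * w + (((N : ℝ) + 1) * p) * (w * (a - 1)) := by ring
    rw [mul_sub, this, hNp]; ring
  -- Bernoulli
  have hs : (-1 : ℝ) ≤ a - 1 := by linarith
  have ha1 : a = 1 + (a - 1) := by ring
  have hbern : a ^ p ≤ 1 + p * (a - 1) := by
    have := rpow_one_add_le_one_add_mul_self hs hp0.le hp1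
    simpa using this
  have hposfac : (0 : ℝ) < ((N : ℝ) + 1) * w := by positivity
  constructor
  · rw [hfact]
    exact mul_nonpos_of_nonneg_of_nonpos hposfac.le (by linarith)
  · rw [hfact]
    constructor
    · intro heq
      have h0 : a ^ p - (1 + p * (a - 1)) = 0 := by
        rcases mul_eq_zero.mp heq with h | h
        · exact absurd h hposfac.ne'
        · exact h
      by_contra hne
      have haw : a ≠ 1 := by
        intro h1
        apply hne
        have := hadef
        field_simp [hadef] at h1
        rw [hadef, div_eq_one_iff_eq hw.ne'] at h1; exact h1
      have hplt : p < 1 := by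
        refine lt_of_le_of_ne hp1 ?_
        rw [hpdef]; intro h
        have h1N : (1:ℝ) ≤ (N:ℝ) := by exact_mod_cast hN
        rw [div_eq_one_iff_eq hN1.ne'] at h
        linarith
      have hstrict : a ^ p < 1 + p * (a - 1) := by
        have := rpow_one_add_lt_one_add_mul_self hs
          (by intro h; exact haw (by linarith)) hp0 hplt
        simpa using this
      linarith
    · intro heq
      have ha1' : a = 1 := by rw [hadef, heq, div_self hw.ne']
      rw [ha1']
      simp [Real.one_rpow]
end

section
/- (Appendix A) The power variation ΔP(h) = (N+1)·(wᴺ·σ²/h²)^{1/(N+1)} − N·w − σ²/h² is a monotonically decreasing function of h on the region where h² ≥ σ²/w: for any gains h_a ≥ h_b > 0 with h_b² ≥ σ²/w, one has ΔP(h_a) ≤ ΔP(h_b). Hence among candidate subcarriers satisfying h² > σ²/w, the one with the best channel gain yields the largest power decrease. -/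
lemma pow_diff_le_aux (M : ℕ) (u v a : ℝ) (hu : 0 ≤ u) (huv : u ≤ v) (hva : v ≤ a) :
    v ^ M - u ^ M ≤ (M : ℝ) * a ^ (M - 1) * (v - u) := by
  have ha0 : 0 ≤ a := le_trans (le_trans hu huv) hva
  have hv0 : 0 ≤ v := le_trans hu huv
  rw [← geom_sum₂_mul]
  have hsum : (∑ i ∈ Finset.range M, v ^ i * u ^ (M - 1 - i)) ≤ (M : ℝ) * a ^ (M - 1) := by
    calc (∑ i ∈ Finset.range M, v ^ i * u ^ (M - 1 - i))
        ≤ ∑ i ∈ Finset.range M, a ^ (M - 1) := by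
          apply Finset.sum_le_sum
          intro i hi
          have hi' : i < M := Finset.mem_range.mp hi
          have : v ^ i * u ^ (M - 1 - i) ≤ a ^ i * a ^ (M - 1 - i) := by
            apply mul_le_mul (pow_le_pow_left₀ hv0 hva i)
              (pow_le_pow_left₀ hu (le_trans huv hva) _)
              (pow_nonneg hu _) (pow_nonneg ha0 _)
          calc v ^ i * u ^ (M - 1 - i) ≤ a ^ i * a ^ (M - 1 - i) := this
            _ = a ^ (M - 1) := by rw [← pow_add]; congr 1; omega
      _ = (M : ℝ) * a ^ (M - 1) := by
          rw [Finset.sum_const, Finset.card_range, nsmul_eq_mul]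
  exact mul_le_mul_of_nonneg_right hsum (sub_nonneg.mpr huv)

/-- Appendix A: `ΔP(h) = (N+1)·(wᴺ·σ²/h²)^(1/(N+1)) − N·w − σ²/h²` is
monotonically decreasing in `h` on the region `h² ≥ σ²/w`: for any
`h_a ≥ h_b > 0` with `h_b² ≥ σ²/w`, one has `ΔP(h_a) ≤ ΔP(h_b)`. -/
theorem power_variation_decreasing_in_gain
    (N : ℕ) (hN : 1 ≤ N) (w σ2 : ℝ) (hw : 0 < w) (hσ2 : 0 < σ2)
    (ΔP : ℝ → ℝ)
    (hΔP : ∀ h : ℝ, ΔP h =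
      ((N : ℝ) + 1) * (w ^ N * σ2 / h ^ 2) ^ ((1 : ℝ) / (N + 1)) - N * w - σ2 / h ^ 2)
    (ha hb : ℝ) (hab : ha ≥ hb) (hbpos : 0 < hb) (hbdom : hb ^ 2 ≥ σ2 / w) :
    ΔP ha ≤ ΔP hb := by
  have hapos : 0 < ha := lt_of_lt_of_le hbpos hab
  set e : ℝ := (1 : ℝ) / (N + 1) with he
  have heM : e = ((N + 1 : ℕ) : ℝ)⁻¹ := by push_cast [he]; rw [one_div]
  have he0 : 0 ≤ e := by positivity
  set ta : ℝ := σ2 / ha ^ 2 with hta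
  set tb : ℝ := σ2 / hb ^ 2 with htb
  have hta0 : 0 < ta := by positivity
  have htb0 : 0 < tb := by positivity
  have htab : ta ≤ tb := by
    apply div_le_div_of_nonneg_left hσ2.le (by positivity)
    exact pow_le_pow_left₀ hbpos.le hab 2
  have htbw : tb ≤ w := by
    rw [htb, div_le_iff₀ (by positivity)]
    rw [ge_iff_le, div_le_iff₀ hw] at hbdom
    linarith [mul_comm w (hb ^ 2)]
  set u : ℝ := ta ^ e with hu
  set v : ℝ := tb ^ e with hv
  set a : ℝ := w ^ e with hadef
  have hMnat : ((N + 1 : ℕ) : ℝ) ≠ 0 := by positivity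
  have huM : u ^ (N + 1) = ta := by
    rw [hu, heM, Real.rpow_inv_natCast_pow hta0.le (by omega)]
  have hvM : v ^ (N + 1) = tb := by
    rw [hv, heM, Real.rpow_inv_natCast_pow htb0.le (by omega)]
  have hpow : ∀ t : ℝ, 0 < t → (w ^ N * t) ^ e = a ^ N * t ^ e := by
    intro t ht
    rw [Real.mul_rpow (by positivity) ht.le, hadef,
      ← Real.rpow_natCast w N, ← Real.rpow_mul hw.le, ← Real.rpow_natCast (w ^ e) N,
      ← Real.rpow_mul hw.le]
    rw [mul_comm e (N:ℝ)]
  have hu0 : 0 ≤ u := Real.rpow_nonneg hta0.le e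
  have huv : u ≤ v := Real.rpow_le_rpow hta0.le htab he0
  have hva : v ≤ a := Real.rpow_le_rpow htb0.le htbw he0
  have key := pow_diff_le_aux (N + 1) u v a hu0 huv hva
  rw [hΔP ha, hΔP hb, ← hta, ← htb]
  have e1 : (w ^ N * σ2 / ha ^ 2) = w ^ N * ta := by rw [hta]; ring
  have e2 : (w ^ N * σ2 / hb ^ 2) = w ^ N * tb := by rw [htb]; ring
  rw [e1, e2, hpow ta hta0, hpow tb htb0, ← hu, ← hv]
  have hcast : ((N + 1 : ℕ) : ℝ) = (N : ℝ) + 1 := by push_cast; ring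
  have hsub : (N + 1) - 1 = N := by omega
  rw [hcast, hsub] at key
  rw [← huM, ← hvM]
  nlinarith [key]
end

section
/- (LPO optimum, eq. (12)) Define P* = ((w·h²/(Q·h² + σ²))^{N/(N+1)} − 1)·(Q + σ²/h²). If w·h² ≥ Q·h² + σ² (so that P* ≥ 0), then P* is the global minimizer of f over [0, ∞): f(P) ≥ f(P*) for every P ≥ 0, and the derivative of f vanishes at P*. -/
open Real

/-- Weighted AM–GM core inequality for the LPO problem. -/
lemma LPO_amgm_key (n : ℕ) (hn : 1 ≤ n) (k a u : ℝ) (hk : 0 < k) (ha : 0 < a)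
    (hu : 0 < u) :
    ((n : ℝ) + 1) * k * a ^ ((n : ℝ) / ((n : ℝ) + 1)) ≤
      k * u + (n : ℝ) * (k * a) * u ^ (-(1 / (n : ℝ))) := by
  have hn0 : (0 : ℝ) < (n : ℝ) := by exact_mod_cast hn
  have hn1 : (0 : ℝ) < (n : ℝ) + 1 := by linarith
  set w₁ : ℝ := 1 / ((n : ℝ) + 1) with hw₁def
  set w₂ : ℝ := (n : ℝ) / ((n : ℝ) + 1) with hw₂def
  have hw₁ : 0 ≤ w₁ := by positivity
  have hw₂ : 0 ≤ w₂ := by positivity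
  have hsum : w₁ + w₂ = 1 := by rw [hw₁def, hw₂def]; field_simp; ring
  set p₁ : ℝ := (((n : ℝ) + 1) * k) * u with hp₁def
  set p₂ : ℝ := (((n : ℝ) + 1) * k) * a * u ^ (-(1 / (n : ℝ))) with hp₂def
  have hp₁ : 0 ≤ p₁ := by positivity
  have hp₂ : 0 ≤ p₂ := by positivity
  have hAM := Real.geom_mean_le_arith_mean2_weighted hw₁ hw₂ hp₁ hp₂ hsum
  have hune : u ^ w₁ ≠ 0 := (Real.rpow_pos_of_pos hu _).ne'
  have he : (-(1 / (n : ℝ))) * w₂ = -w₁ := by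
    rw [hw₁def, hw₂def]; field_simp
  have hA : (((n : ℝ) + 1) * k) ^ w₁ * (((n : ℝ) + 1) * k) ^ w₂ = ((n : ℝ) + 1) * k := by
    rw [← Real.rpow_add (by positivity), hsum, Real.rpow_one]
  have hgeom : p₁ ^ w₁ * p₂ ^ w₂ = ((n : ℝ) + 1) * k * a ^ w₂ := by
    rw [hp₁def, hp₂def,
      Real.mul_rpow (x := (((n : ℝ) + 1) * k) * a) (by positivity) (by positivity),
      ← Real.rpow_mul hu.le, he, Real.rpow_neg hu.le,
      Real.mul_rpow (x := ((n : ℝ) + 1) * k) (by positivity) hu.le,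
      Real.mul_rpow (x := ((n : ℝ) + 1) * k) (by positivity) ha.le,
      show (((n : ℝ) + 1) * k) ^ w₁ * u ^ w₁ *
          ((((n : ℝ) + 1) * k) ^ w₂ * a ^ w₂ * (u ^ w₁)⁻¹) =
        ((((n : ℝ) + 1) * k) ^ w₁ * (((n : ℝ) + 1) * k) ^ w₂) * a ^ w₂ *
          (u ^ w₁ * (u ^ w₁)⁻¹) from by ring,
      mul_inv_cancel₀ hune, hA, mul_one]
  have harith : w₁ * p₁ + w₂ * p₂ = k * u + (n : ℝ) * (k * a) * u ^ (-(1 / (n : ℝ))) := by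
    rw [hp₁def, hp₂def, hw₁def, hw₂def]
    field_simp
  rw [hgeom, harith] at hAM
  exact hAM

/-- LPO optimum (eq. (12)): with
`P* = ((w·h²/(Q·h² + σ²))^{N/(N+1)} − 1)·(Q + σ²/h²)`, if
`w·h² ≥ Q·h² + σ²` then `P* ≥ 0`, `P*` is the global minimizer of `f` over
`[0, ∞)`, and the derivative of `f` vanishes at `P*`. -/
theorem LPO_optimum
    (N : ℕ) (hN : 1 ≤ N) (w Q h σ2 : ℝ) (hw : 0 < w) (hQ : 0 ≤ Q)
    (hh : 0 < h) (hσ2 : 0 < σ2)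
    (f : ℝ → ℝ)
    (hf : ∀ P : ℝ, f P =
      P + N * w * ((1 + P * h ^ 2 / (Q * h ^ 2 + σ2)) ^ (-(1 / (N : ℝ))) - 1))
    (Pstar : ℝ)
    (hPstar : Pstar =
      ((w * h ^ 2 / (Q * h ^ 2 + σ2)) ^ ((N : ℝ) / (N + 1)) - 1) * (Q + σ2 / h ^ 2))
    (hfeas : w * h ^ 2 ≥ Q * h ^ 2 + σ2) :
    0 ≤ Pstar ∧ (∀ P : ℝ, 0 ≤ P → f Pstar ≤ f P) ∧ HasDerivAt f 0 Pstar := by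
  have hN0 : (0 : ℝ) < (N : ℝ) := by exact_mod_cast hN
  have hN1 : (0 : ℝ) < (N : ℝ) + 1 := by linarith
  obtain ⟨c, hcdef⟩ : ∃ c : ℝ, Q * h ^ 2 + σ2 = c := ⟨_, rfl⟩
  have hc : 0 < c := by rw [← hcdef]; positivity
  rw [hcdef] at hf hPstar hfeas
  obtain ⟨k, hkdef⟩ : ∃ k : ℝ, Q + σ2 / h ^ 2 = k := ⟨_, rfl⟩
  have hk : 0 < k := by rw [← hkdef]; positivity
  rw [hkdef] at hPstar
  obtain ⟨a, hadef⟩ : ∃ a : ℝ, w * h ^ 2 / c = a := ⟨_, rfl⟩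
  have ha : 0 < a := by rw [← hadef]; positivity
  have ha1 : 1 ≤ a := by rw [← hadef]; exact (one_le_div hc).mpr hfeas
  rw [hadef] at hPstar
  obtain ⟨e, hedef⟩ : ∃ e : ℝ, (N : ℝ) / ((N : ℝ) + 1) = e := ⟨_, rfl⟩
  have he0 : 0 ≤ e := by rw [← hedef]; positivity
  rw [hedef] at hPstar
  have hPs : Pstar = (a ^ e - 1) * k := hPstar
  have haepos : 0 < a ^ e := Real.rpow_pos_of_pos ha e
  have hae1 : 1 ≤ a ^ e := Real.one_le_rpow ha1 he0
  have hkc : k * h ^ 2 = c := by rw [← hkdef, ← hcdef]; field_simp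
  have hwka : w = k * a := by
    rw [← hkdef, ← hadef, ← hcdef]; field_simp
  have hkey : 1 + Pstar * h ^ 2 / c = a ^ e := by
    rw [hPs]
    have h1 : (a ^ e - 1) * k * h ^ 2 = (a ^ e - 1) * c := by rw [mul_assoc, hkc]
    rw [h1]
    field_simp
    ring
  have hPsnn : 0 ≤ Pstar := by
    rw [hPs]
    have : 0 ≤ a ^ e - 1 := by linarith
    positivity
  refine ⟨hPsnn, ?_, ?_⟩
  · -- global minimizer
    intro P hP
    rw [hf P, hf Pstar, hkey]
    obtain ⟨u, hudef⟩ : ∃ u : ℝ, 1 + P * h ^ 2 / c = u := ⟨_, rfl⟩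
    have hu : 0 < u := by rw [← hudef]; positivity
    rw [hudef]
    have hPu : P = (u - 1) * k := by
      rw [← hudef]
      field_simp
      nlinarith [hkc]
    have hmain := LPO_amgm_key N hN k a u hk ha hu
    rw [hedef] at hmain
    have hxe : (a ^ e) ^ (-(1 / (N : ℝ))) = a ^ (-(1 / ((N : ℝ) + 1))) := by
      rw [← Real.rpow_mul ha.le]
      congr 1
      rw [← hedef]
      field_simp
    have haa : (N : ℝ) * (k * a) * a ^ (-(1 / ((N : ℝ) + 1))) = (N : ℝ) * k * a ^ e := by
      have h1 : a * a ^ (-(1 / ((N : ℝ) + 1))) = a ^ e := by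
        nth_rewrite 1 [← Real.rpow_one a]
        rw [← Real.rpow_add ha, ← hedef]
        congr 1
        field_simp
        ring
      calc (N : ℝ) * (k * a) * a ^ (-(1 / ((N : ℝ) + 1)))
          = (N : ℝ) * k * (a * a ^ (-(1 / ((N : ℝ) + 1)))) := by ring
        _ = (N : ℝ) * k * a ^ e := by rw [h1]
    rw [hxe, hPs, hPu, hwka]
    nlinarith [hmain, haa]
  · -- derivative vanishes
    have hfun : f = fun P => P + N * w * ((1 + P * h ^ 2 / c) ^ (-(1 / (N : ℝ))) - 1) :=
      funext hf
    have hg : HasDerivAt (fun P : ℝ => 1 + P * h ^ 2 / c) (h ^ 2 / c) Pstar := by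
      have := (((hasDerivAt_id Pstar).mul_const (h ^ 2)).div_const c).const_add 1
      simpa using this
    have hne : (1 + Pstar * h ^ 2 / c) ≠ 0 := by rw [hkey]; exact haepos.ne'
    have hrpow := hg.rpow_const (p := -(1 / (N : ℝ))) (Or.inl hne)
    have hd : HasDerivAt (fun P => P + N * w * ((1 + P * h ^ 2 / c) ^ (-(1 / (N : ℝ))) - 1))
        (1 + (N : ℝ) * w * (h ^ 2 / c * (-(1 / (N : ℝ))) *
          (1 + Pstar * h ^ 2 / c) ^ (-(1 / (N : ℝ)) - 1))) Pstar := by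
      exact (hasDerivAt_id Pstar).add (((hrpow).sub_const 1).const_mul ((N : ℝ) * w))
    have hzero : (1 : ℝ) + (N : ℝ) * w * (h ^ 2 / c * (-(1 / (N : ℝ))) *
        (1 + Pstar * h ^ 2 / c) ^ (-(1 / (N : ℝ)) - 1)) = 0 := by
      rw [hkey]
      have hx : (a ^ e) ^ (-(1 / (N : ℝ)) - 1) = a⁻¹ := by
        rw [← Real.rpow_mul ha.le]
        have h1 : e * (-(1 / (N : ℝ)) - 1) = -1 := by
          rw [← hedef]; field_simp; ring
        rw [h1, Real.rpow_neg_one]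
      rw [hx]
      have hNN : (N : ℝ) * (1 / (N : ℝ)) = 1 := by field_simp
      have haainv : w * h ^ 2 / c * a⁻¹ = 1 := by
        rw [hadef]; exact mul_inv_cancel₀ ha.ne'
      have h2 : (N : ℝ) * w * (h ^ 2 / c * (-(1 / (N : ℝ))) * a⁻¹) = -1 := by
        calc (N : ℝ) * w * (h ^ 2 / c * (-(1 / (N : ℝ))) * a⁻¹)
            = -(((N : ℝ) * (1 / (N : ℝ))) * (w * h ^ 2 / c * a⁻¹)) := by ring
          _ = -1 := by rw [hNN, haainv]; norm_num
      rw [h2]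
      ring
    rw [hfun, ← hzero]
    exact hd
end

section
/- (LPO constrained case) Define P* = ((w·h²/(Q·h² + σ²))^{N/(N+1)} − 1)·(Q + σ²/h²). If P* ≤ Q (so that the unconstrained optimum violates the power multiplexing constraint P ≥ Q), then the minimum of f over [Q, ∞) is attained at the boundary: f(P) ≥ f(Q) for every P ≥ Q. -/
/-- LPO constrained case: with
`P* = ((w·h²/(Q·h² + σ²))^{N/(N+1)} − 1)·(Q + σ²/h²)`, if `P* ≤ Q` then the
minimum of `f` over `[Q, ∞)` is attained at the boundary: `f(Q) ≤ f(P)` for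
every `P ≥ Q`. -/
theorem LPO_constrained_boundary
    (N : ℕ) (hN : 1 ≤ N) (w Q h σ2 : ℝ) (hw : 0 < w) (hQ : 0 < Q)
    (hh : 0 < h) (hσ2 : 0 < σ2)
    (f : ℝ → ℝ)
    (hf : ∀ P : ℝ, f P =
      P + N * w * ((1 + P * h ^ 2 / (Q * h ^ 2 + σ2)) ^ (-(1 / (N : ℝ))) - 1))
    (Pstar : ℝ)
    (hPstar : Pstar =
      ((w * h ^ 2 / (Q * h ^ 2 + σ2)) ^ ((N : ℝ) / (N + 1)) - 1) * (Q + σ2 / h ^ 2))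
    (hviol : Pstar ≤ Q) :
    ∀ P : ℝ, Q ≤ P → f Q ≤ f P := by
  have hden : (0:ℝ) < Q * h ^ 2 + σ2 := by positivity
  set A : ℝ := h ^ 2 / (Q * h ^ 2 + σ2) with hAdef
  have hApos : 0 < A := by positivity
  have hNpos : (0:ℝ) < (N:ℝ) := by exact_mod_cast hN
  have hNne : (N:ℝ) ≠ 0 := ne_of_gt hNpos
  have hN1 : (0:ℝ) < (N:ℝ) + 1 := by linarith
  -- c = Q + σ2/h² = 1/A
  have hcA : (Q + σ2 / h ^ 2) * A = 1 := by
    field_simp [hAdef]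
    rw [hAdef]; field_simp [hden.ne']
  -- key inequality: (w*A)^(N/(N+1)) ≤ 1 + Q*A
  have hkey : (w * A) ^ ((N:ℝ) / (N + 1)) ≤ 1 + Q * A := by
    have h1 : ((w * A) ^ ((N:ℝ) / (N + 1)) - 1) * (Q + σ2 / h ^ 2) ≤ Q := by
      rw [hPstar] at hviol
      have : w * h ^ 2 / (Q * h ^ 2 + σ2) = w * A := by
        rw [hAdef]; ring
      rwa [this] at hviol
    have h2 := mul_le_mul_of_nonneg_right h1 (le_of_lt hApos)
    rw [mul_assoc, hcA, mul_one] at h2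
    linarith
  -- the main lemma: derivative-based monotonicity on Ici Q
  set g : ℝ → ℝ := fun P => P + N * w * ((1 + P * A) ^ (-(1 / (N:ℝ))) - 1) with hg
  have hfg : ∀ P, f P = g P := by
    intro P
    rw [hf P, hg]
    simp only [hAdef]
    ring_nf
  have hbase : ∀ x : ℝ, Q ≤ x → (0:ℝ) < 1 + x * A := by
    intro x hx
    have : 0 ≤ x * A := mul_nonneg (le_trans hQ.le hx) hApos.le
    linarith
  -- derivative of g at x (for x ≥ Q)
  have hderiv : ∀ x : ℝ, Q ≤ x →
      HasDerivAt g (1 - w * A * (1 + x * A) ^ (-(1 / (N:ℝ)) - 1)) x := by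
    intro x hx
    have hbx : (1:ℝ) + x * A ≠ 0 := ne_of_gt (hbase x hx)
    have h1 : HasDerivAt (fun y : ℝ => 1 + y * A) A x := by
      simpa using ((hasDerivAt_id x).mul_const A).const_add 1
    have h2 : HasDerivAt (fun y : ℝ => (1 + y * A) ^ (-(1 / (N:ℝ))))
        (A * (-(1 / (N:ℝ))) * (1 + x * A) ^ (-(1 / (N:ℝ)) - 1)) x :=
      h1.rpow_const (Or.inl hbx)
    have h3 : HasDerivAt g
        (1 + N * w * (A * (-(1 / (N:ℝ))) * (1 + x * A) ^ (-(1 / (N:ℝ)) - 1))) x := by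
      exact (hasDerivAt_id x).add (((h2.sub_const 1).const_mul (N * w)))
    convert h3 using 1
    field_simp
    ring
  -- derivative is nonnegative on Ici Q
  have hderiv_nonneg : ∀ x : ℝ, Q ≤ x →
      0 ≤ 1 - w * A * (1 + x * A) ^ (-(1 / (N:ℝ)) - 1) := by
    intro x hx
    have hbx : (0:ℝ) < 1 + x * A := hbase x hx
    have hxA : 1 + Q * A ≤ 1 + x * A := by nlinarith
    have hmono : (w * A) ^ ((N:ℝ) / (N + 1)) ≤ 1 + x * A := le_trans hkey hxA
    have hwA : 0 ≤ w * A := mul_nonneg hw.le hApos.le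
    have hexp : (0:ℝ) ≤ ((N:ℝ) + 1) / N := by positivity
    have h4 : ((w * A) ^ ((N:ℝ) / (N + 1))) ^ (((N:ℝ) + 1) / N)
        ≤ (1 + x * A) ^ (((N:ℝ) + 1) / N) :=
      Real.rpow_le_rpow (Real.rpow_nonneg hwA _) hmono hexp
    have h5 : ((w * A) ^ ((N:ℝ) / (N + 1))) ^ (((N:ℝ) + 1) / N) = w * A := by
      rw [← Real.rpow_mul hwA]
      have he : (N:ℝ) / (N + 1) * (((N:ℝ) + 1) / N) = 1 := by
        field_simp
      rw [he, Real.rpow_one]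
    have h6 : w * A ≤ (1 + x * A) ^ (((N:ℝ) + 1) / N) := h5 ▸ h4
    have hexpeq : -(1 / (N:ℝ)) - 1 = -(((N:ℝ) + 1) / N) := by
      field_simp
      ring
    rw [hexpeq, Real.rpow_neg hbx.le]
    have hy : (0:ℝ) < (1 + x * A) ^ (((N:ℝ) + 1) / N) :=
      Real.rpow_pos_of_pos hbx _
    have h7 := mul_le_mul_of_nonneg_right h6 (inv_nonneg.mpr hy.le)
    rw [mul_inv_cancel₀ (ne_of_gt hy)] at h7
    linarith
  -- conclude monotonicity via MVT
  have hmono : MonotoneOn g (Set.Ici Q) := by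
    apply monotoneOn_of_deriv_nonneg (convex_Ici Q)
    · exact fun x hx => ((hderiv x hx).continuousAt).continuousWithinAt
    · intro x hx
      rw [interior_Ici] at hx
      exact ((hderiv x (le_of_lt hx)).differentiableAt).differentiableWithinAt
    · intro x hx
      rw [interior_Ici] at hx
      rw [(hderiv x (le_of_lt hx)).deriv]
      exact hderiv_nonneg x (le_of_lt hx)
  intro P hP
  rw [hfg, hfg]
  exact hmono (Set.self_mem_Ici) hP hP
end
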